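/- Let 0 → A → C → B → 0 be a short exact sequence 𝓔 in 𝒜, let 0 → A → J•, 0 → B → K•, 0 → C → L• be F-acyclic resolutions, and let 𝐄 = (0 → J• → L• → K• → 0) be a short exact sequence of complexes whose augmentations form a commutative diagram with 𝓔. Then for every i ≥ 0 the square commutes: c^{i+1} ∘ δ^i_{F𝐄} = ∂^i_𝓔 ∘ c^i, where δ^i_{F𝐄} : H^i(FK•) → H^{i+1}(FJ•) is the connecting homomorphism of the short exact sequence of complexes 0 → FJ• → FL• → FK• → 0, ∂^i_𝓔 : R^iFB → R^{i+1}FA is the connecting homomorphism of the derived-functor long exact sequence of 𝓔, and c^i : H^i(FK•) → R^iFB, c^{i+1} : H^{i+1}(FJ•) → R^{i+1}FA are the canonical isomorphisms. -/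

import Mathlib

set_option linter.unusedSectionVars false

open CategoryTheory CategoryTheory.Limits HomologicalComplex

section PlainComplexes

variable {A : Type*} [Category A] [Abelian A]

/-- The shifted complex `C_{[j]}` with `C_{[j]}^p = C^{j+p}` and the differentials of `C`. -/
noncomputable def shiftedC (C : CochainComplex A ℕ) (j : ℕ) : CochainComplex A ℕ :=
  CochainComplex.of (fun p => C.X (j + p)) (fun p => C.d (j + p) (j + p + 1))
    (fun _ => C.d_comp_d _ _ _)

lemma shiftedC_d (C : CochainComplex A ℕ) (j p : ℕ) :
    (shiftedC C j).d p (p + 1) = C.d (j + p) (j + p + 1) :=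
  CochainComplex.of_d _ (fun p => C.d (j + p) (j + p + 1)) p

/-- The canonical identification `H^{t+1}(C_{[j]}) ≅ H^{j+t+1}(C)`. -/
noncomputable def shiftHomologyIso (C : CochainComplex A ℕ) (j t n : ℕ) (hn : j + t + 1 = n) :
    (shiftedC C j).homology (t + 1) ≅ C.homology n := by
  subst hn
  refine (shiftedC C j).homologyIsoSc' t (t+1) (t+2) (by simp) (by simp) ≪≫
    ShortComplex.homologyMapIso ?_ ≪≫
      (C.homologyIsoSc' (j+t) (j+t+1) (j+t+2) (by simp) (by simp)).symm
  refine ShortComplex.isoMk (Iso.refl _) (Iso.refl _) (Iso.refl _) ?_ ?_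
  · simp only [Iso.refl_hom, Category.id_comp, Category.comp_id]
    exact (Category.id_comp _).trans ((shiftedC_d C j t).symm.trans (Category.comp_id _).symm)
  · simp only [Iso.refl_hom, Category.id_comp, Category.comp_id]
    exact (Category.id_comp _).trans
      ((shiftedC_d C j (t+1)).symm.trans (Category.comp_id _).symm)

/-- The canonical comparison map `H^0(C_{[j]}) ⟶ H^j(C)`, induced by the identification of
`H^0(C_{[j]})` with the cycles of `C` in degree `j`. -/
noncomputable def shiftHomologyMap₀ (C : CochainComplex A ℕ) (j : ℕ) :
    (shiftedC C j).homology 0 ⟶ C.homology j :=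
  (CochainComplex.isoHomologyπ₀ _).inv ≫
    C.liftCycles (show (shiftedC C j).cycles 0 ⟶ C.X j from (shiftedC C j).iCycles 0)
      (j + 1) (by simp)
      (by
        rw [show C.d j (j+1) = (shiftedC C j).d 0 1 from (shiftedC_d C j 0).symm]
        exact (shiftedC C j).iCycles_d 0 1) ≫ C.homologyπ j

/-- The differential of the complex `L_i`, given in matrix form (acting on column vectors) by
`(x, y) ↦ (δ x + (-1)^{p+1} y, δ y)`. -/
noncomputable def Ldiff (C : CochainComplex A ℕ) (i p : ℕ) :
    (C.X (i + p) ⊞ C.X (i + p + 1) : A) ⟶ (C.X (i + p + 1) ⊞ C.X (i + p + 2) : A) :=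
  biprod.desc (C.d (i + p) (i + p + 1) ≫ biprod.inl)
    (((-1 : ℤ) ^ (p + 1)) • biprod.inl + C.d (i + p + 1) (i + p + 2) ≫ biprod.inr)

lemma Ldiff_comp_Ldiff (C : CochainComplex A ℕ) (i p : ℕ) :
    Ldiff C i p ≫ Ldiff C i (p + 1) = 0 := by
  ext
  · simp [Ldiff]
    exact C.d_comp_d _ _ _
  · simp [Ldiff]
  · simp [Ldiff, pow_succ]
    exact neg_add_cancel _
  · simp [Ldiff]
    exact C.d_comp_d _ _ _

/-- The complex `L_i` with `L_i^p = C^{i+p} ⊕ C^{i+p+1}` and differential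
`(x, y) ↦ (δ x + (-1)^{p+1} y, δ y)`. -/
noncomputable def Lcx (C : CochainComplex A ℕ) (i : ℕ) : CochainComplex A ℕ :=
  CochainComplex.of (fun p => C.X (i + p) ⊞ C.X (i + p + 1)) (Ldiff C i)
    (Ldiff_comp_Ldiff C i)

lemma Lcx_d (C : CochainComplex A ℕ) (i p : ℕ) :
    (Lcx C i).d p (p + 1) = Ldiff C i p :=
  CochainComplex.of_d _ (Ldiff C i) p

/-- The augmentation `J^i ⟶ L_i^0 = J^i ⊕ J^{i+1}`, given by the column vector `(1, δ^i)`. -/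
noncomputable def Laug (C : CochainComplex A ℕ) (i : ℕ) :
    C.X i ⟶ (Lcx C i).X 0 :=
  biprod.lift (𝟙 (C.X i)) (C.d i (i + 1))

lemma d_eqToHom (C : CochainComplex A ℕ) {a a' b b' : ℕ} (ha : a = a') (hb : b = b') :
    C.d a' b' = eqToHom (congrArg C.X ha.symm) ≫ C.d a b ≫ eqToHom (congrArg C.X hb) := by
  subst ha; subst hb; simp

/-- The levelwise inclusions `K_i^p = C^{i+p} ⟶ L_i^p = C^{i+p} ⊕ C^{i+p+1}` as a chain
map `K_i ⟶ L_i`. -/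
noncomputable def Lincl (C : CochainComplex A ℕ) (i : ℕ) : shiftedC C i ⟶ Lcx C i where
  f _ := biprod.inl
  comm' := by
    rintro p q rfl
    rw [Lcx_d, shiftedC_d, Ldiff]
    exact biprod.inl_desc _ _

/-- The levelwise projections `L_i^p = C^{i+p} ⊕ C^{i+p+1} ⟶ K_{i+1}^p = C^{i+p+1}` as a
chain map `L_i ⟶ K_{i+1}`. -/
noncomputable def Lproj (C : CochainComplex A ℕ) (i : ℕ) : Lcx C i ⟶ shiftedC C (i + 1) where
  f p := biprod.snd ≫ eqToHom (show C.X (i + p + 1) = (shiftedC C (i + 1)).X p by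
    rw [show (shiftedC C (i + 1)).X p = C.X (i + 1 + p) from rfl,
      show i + 1 + p = i + p + 1 by omega])
  comm' := by
    rintro p q rfl
    rw [Lcx_d, shiftedC_d,
      d_eqToHom C (show i + p + 1 = i + 1 + p by omega)
        (show i + 1 + p + 1 = i + p + 2 by omega).symm]
    refine biprod.hom_ext' _ _ ?_ ?_
    · have h : C.d (i+p) (i+p+1) ≫
          (biprod.inl : C.X (i+p+1) ⟶ C.X (i+p+1) ⊞ C.X (i+p+2)) ≫ biprod.snd ≫
            eqToHom (show (C.X (i+p+2) : A) = C.X (i+1+(p+1)) by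
              rw [show i+1+(p+1) = i+p+2 by omega]) = 0 := by simp
      rw [Ldiff]
      first
        | (dsimp only [Lcx, shiftedC] at *
           simp only [biprod.inl_desc_assoc, Category.assoc, biprod.inl_snd_assoc,
             Limits.zero_comp]
           exact h.symm)
        | (refine Eq.trans ?_ (Eq.trans h.symm ?_)
           · simp only [Category.assoc]; erw [biprod.inl_snd_assoc, Limits.zero_comp]
           · erw [biprod.inl_desc_assoc]; simp only [Category.assoc])
        | (erw [biprod.inl_desc_assoc]; simp only [Category.assoc];
           erw [biprod.inl_snd_assoc, Limits.zero_comp]; exact h.symm)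
        | (erw [biprod.inl_snd_assoc, Limits.zero_comp]; exact h.symm)
        | (simp [Ldiff]; done)
    · have h : ((-1 : ℤ)^(p+1)) •
          ((biprod.inl : C.X (i+p+1) ⟶ C.X (i+p+1) ⊞ C.X (i+p+2)) ≫ biprod.snd ≫
            eqToHom (show (C.X (i+p+2) : A) = C.X (i+1+(p+1)) by
              rw [show i+1+(p+1) = i+p+2 by omega])) +
          C.d (i+p+1) (i+p+2) ≫
          (biprod.inr : C.X (i+p+2) ⟶ C.X (i+p+1) ⊞ C.X (i+p+2)) ≫ biprod.snd ≫
            eqToHom (show (C.X (i+p+2) : A) = C.X (i+1+(p+1)) by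
              rw [show i+1+(p+1) = i+p+2 by omega]) =
          C.d (i+p+1) (i+p+2) ≫
            eqToHom (show (C.X (i+p+2) : A) = C.X (i+1+(p+1)) by
              rw [show i+1+(p+1) = i+p+2 by omega]) := by simp
      rw [Ldiff]
      first
        | (dsimp only [Lcx, shiftedC] at *
           simp only [biprod.inr_desc_assoc, Preadditive.add_comp, Preadditive.zsmul_comp,
             Category.assoc, biprod.inr_snd_assoc, eqToHom_trans_assoc, eqToHom_refl,
             Category.id_comp]
           first
             | exact h.symm
             | (refine Eq.trans ?_ h.symm; simp)
             | (refine Eq.trans ?_ h.symm; erw [eqToHom_trans_assoc]; simp))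
        | (dsimp only [Lcx, shiftedC] at *
           simp only [biprod.inr_desc_assoc, Preadditive.add_comp, Preadditive.zsmul_comp,
             Category.assoc, biprod.inr_snd_assoc, eqToHom_trans_assoc, eqToHom_refl,
             Category.id_comp]
           exact h.symm)
        | (refine Eq.trans ?_ (Eq.trans h.symm ?_)
           · simp only [Category.assoc]; erw [biprod.inr_snd_assoc]
             simp only [eqToHom_trans_assoc, eqToHom_refl, Category.id_comp]
           · erw [biprod.inr_desc_assoc]; simp only [Category.assoc, Preadditive.add_comp,
               Preadditive.zsmul_comp])
        | (erw [biprod.inr_desc_assoc]; simp only [Category.assoc];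
           erw [biprod.inr_snd_assoc]; simp only [eqToHom_trans_assoc, eqToHom_refl,
             Category.id_comp]; exact h.symm)
        | (erw [biprod.inr_snd_assoc]; simp only [eqToHom_trans_assoc, eqToHom_refl,
             Category.id_comp]; exact h.symm)
        | (simp [Ldiff]; done)

end PlainComplexes

section PlainComplexes2

variable {A : Type*} [Category A] [Abelian A]

/-- `0 ⟶ K_i ⟶ L_i ⟶ K_{i+1} ⟶ 0` as a short complex of cochain complexes. -/
noncomputable def Lses (C : CochainComplex A ℕ) (i : ℕ) :
    ShortComplex (CochainComplex A ℕ) :=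
  ShortComplex.mk (Lincl C i) (Lproj C i) (by
    ext p
    simp only [Lincl, Lproj, HomologicalComplex.comp_f, HomologicalComplex.zero_f_apply]
    exact (biprod.inl_snd_assoc _).trans Limits.zero_comp)

/-- In each degree, `0 ⟶ K_i^p ⟶ L_i^p ⟶ K_{i+1}^p ⟶ 0` is split. -/
noncomputable def LsesSplitting (C : CochainComplex A ℕ) (i p : ℕ) :
    ((Lses C i).map (HomologicalComplex.eval A (ComplexShape.up ℕ) p)).Splitting where
  r := biprod.fst
  s := eqToHom (show (shiftedC C (i + 1)).X p = C.X (i + p + 1) by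
        rw [show (shiftedC C (i + 1)).X p = C.X (i + 1 + p) from rfl,
          show i + 1 + p = i + p + 1 by omega]) ≫ biprod.inr
  f_r := by exact biprod.inl_fst
  s_g := by
    first
      | (dsimp [Lses, Lincl, Lproj, Lcx, shiftedC]; simp; done)
      | (dsimp [Lses, Lproj]
         refine (Category.assoc _ _ _).trans ?_
         refine (congrArg (_ ≫ ·) (biprod.inr_snd_assoc _)).trans ?_
         exact (eqToHom_trans _ _).trans (eqToHom_refl _ _))
  id := by
    dsimp [Lses, Lincl, Lproj]
    first
      | (dsimp [Lcx, shiftedC]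
         simp only [Category.assoc, eqToHom_trans_assoc, eqToHom_refl, Category.id_comp]
         exact biprod.total)
      | (refine Eq.trans ?_ biprod.total
         refine congrArg (_ + ·) ?_
         refine (Category.assoc _ _ _).trans (congrArg (biprod.snd ≫ ·) ?_)
         exact (eqToHom_trans_assoc _ _ _).trans
           ((congrArg (· ≫ biprod.inr) (eqToHom_refl _ _)).trans (Category.id_comp _)))
      | (refine Eq.trans ?_ biprod.total
         congr 1
         refine (Category.assoc _ _ _).trans (congrArg (biprod.snd ≫ ·) ?_)
         simp)

lemma Lses_shortExact (C : CochainComplex A ℕ) (i : ℕ) : (Lses C i).ShortExact := by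
  rw [HomologicalComplex.shortExact_iff_degreewise_shortExact]
  intro p
  exact (LsesSplitting C i p).shortExact

end PlainComplexes2

section Derived

variable {A : Type*} [Category A] [Abelian A] [EnoughInjectives A]
variable {B : Type*} [Category B] [Abelian B]

/-- An object `X` is `F`-acyclic if `R^iF X = 0` for all `i ≥ 1`. -/
def IsFAcyclic (F : A ⥤ B) [F.Additive] (X : A) : Prop :=
  ∀ i : ℕ, 1 ≤ i → IsZero ((F.rightDerived i).obj X)

/-- An `F`-acyclic resolution `0 → M → J⁰ → J¹ → ⋯` of `M`: an exact complex
(encoded, as for `InjectiveResolution`, by a quasi-isomorphism from the complex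
consisting of `M` placed in degree `0`) all of whose terms are `F`-acyclic. -/
structure FAcyclicResolution (F : A ⥤ B) [F.Additive] (M : A) where
  cocomplex : CochainComplex A ℕ
  ι : (CochainComplex.single₀ A).obj M ⟶ cocomplex
  quasiIso : QuasiIso ι := by infer_instance
  acyclic : ∀ n : ℕ, IsFAcyclic F (cocomplex.X n)

attribute [instance] FAcyclicResolution.quasiIso

/-- The canonical comparison map `Hⁿ(F J•) ⟶ RⁿF M` induced by a chain map
`f : J• ⟶ I•` to an injective resolution (lying over `𝟙 M`). -/
noncomputable def canonicalMap (F : A ⥤ B) [F.Additive] {M : A}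
    (J : FAcyclicResolution F M) (I : InjectiveResolution M)
    (f : J.cocomplex ⟶ I.cocomplex) (n : ℕ) :
    ((F.mapHomologicalComplex (ComplexShape.up ℕ)).obj J.cocomplex).homology n ⟶
      (F.rightDerived n).obj M :=
  HomologicalComplex.homologyMap ((F.mapHomologicalComplex (ComplexShape.up ℕ)).map f) n ≫
    (I.isoRightDerivedObj F n).inv

/-- Horseshoe data over a short exact sequence `S = (0 → X₁ → X₂ → X₃ → 0)`:
injective resolutions of the three terms together with a short exact sequence of
complexes among them whose augmentations commute with the maps of `S`.  This is the
data used to define the connecting homomorphisms of the long exact sequence of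
derived functors; it exists by the horseshoe lemma. -/
structure HorseshoeData (S : ShortComplex A) where
  I₁ : InjectiveResolution S.X₁
  I₂ : InjectiveResolution S.X₂
  I₃ : InjectiveResolution S.X₃
  f : I₁.cocomplex ⟶ I₂.cocomplex
  g : I₂.cocomplex ⟶ I₃.cocomplex
  zero : f ≫ g = 0
  shortExact : (ShortComplex.mk f g zero).ShortExact
  comm₁ : I₁.ι ≫ f = (CochainComplex.single₀ A).map S.f ≫ I₂.ι
  comm₂ : I₂.ι ≫ g = (CochainComplex.single₀ A).map S.g ≫ I₃.ι

/-- Applying an additive functor to the (degreewise split, since `I₁` is degreewise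
injective) short exact sequence of complexes of a horseshoe datum yields a short
exact sequence of complexes. -/
lemma HorseshoeData.map_shortExact (F : A ⥤ B) [F.Additive] {S : ShortComplex A}
    (D : HorseshoeData S) :
    ((ShortComplex.mk D.f D.g D.zero).map
      (F.mapHomologicalComplex (ComplexShape.up ℕ))).ShortExact := by
  have hdeg := (HomologicalComplex.shortExact_iff_degreewise_shortExact _).1 D.shortExact
  rw [HomologicalComplex.shortExact_iff_degreewise_shortExact]
  intro n
  haveI : Injective ((ShortComplex.mk D.f D.g D.zero).map
      (HomologicalComplex.eval A (ComplexShape.up ℕ) n)).X₁ :=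
    (inferInstance : Injective (D.I₁.cocomplex.X n))
  exact (((hdeg n).splittingOfInjective).map F).shortExact

/-- The connecting homomorphism `∂^i_𝓔 : R^iF X₃ ⟶ R^{i+1}F X₁` of the long exact
sequence of derived functors associated to a short exact sequence
`𝓔 = (0 → X₁ → X₂ → X₃ → 0)`, computed from a choice of horseshoe data. -/
noncomputable def derivedδ (F : A ⥤ B) [F.Additive] {S : ShortComplex A}
    (D : HorseshoeData S) (i : ℕ) :
    (F.rightDerived i).obj S.X₃ ⟶ (F.rightDerived (i + 1)).obj S.X₁ :=
  (D.I₃.isoRightDerivedObj F i).hom ≫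
    (D.map_shortExact F).δ i (i + 1) rfl ≫
    (D.I₁.isoRightDerivedObj F (i + 1)).inv

/-- The short exact sequence `E_{q+1} = (0 → Z^q → J^q → Z^{q+1} → 0)` in which
`Z^q = ker(δ^q)` (realized as `J.cycles q`) and the second map is the corestriction
of the differential. -/
noncomputable def cyclesSeq (J : CochainComplex A ℕ) (q : ℕ) : ShortComplex A :=
  ShortComplex.mk (J.iCycles q) (J.toCycles q (q + 1))
    (by rw [← cancel_mono (J.iCycles (q + 1))]; simp)

/-- The sequence `0 → Z^q → J^q → Z^{q+1} → 0` is short exact as soon as `J` is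
exact in degree `q+1`. -/
lemma cyclesSeq_shortExact (J : CochainComplex A ℕ) (q : ℕ) (hJ : J.ExactAt (q + 1)) :
    (cyclesSeq J q).ShortExact := by
  have hepi : Epi (J.toCycles q (q + 1)) := by
    have he := (J.exactAt_iff' q (q+1) (q+2) (by simp) (by simp)).1 hJ
    have := he.epi_toCycles
    have heq := J.toCycles_cyclesIsoSc'_hom q (q+1) (q+2) (by simp) (by simp)
    have : J.toCycles q (q+1) = (J.sc' q (q+1) (q+2)).toCycles ≫
        (J.cyclesIsoSc' q (q+1) (q+2) (by simp) (by simp)).inv := by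
      exact ((Iso.comp_inv_eq _).2 heq.symm).symm
    rw [this]
    exact @epi_comp _ _ _ _ _ _ he.epi_toCycles _ _
  exact {
    mono_f := by dsimp [cyclesSeq]; infer_instance
    epi_g := hepi
    exact := by
      apply ShortComplex.exact_of_f_is_kernel
      exact KernelFork.IsLimit.ofι _ _
        (fun {W'} (k : W' ⟶ J.X q) hk => J.liftCycles k (q+1) (by simp)
          (by
            have hk' : k ≫ J.toCycles q (q+1) = 0 := hk
            rw [← J.toCycles_i q (q+1), ← Category.assoc, hk', Limits.zero_comp]))
        (fun {W'} k hk => J.liftCycles_i _ _ _ _)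
        (fun {W'} k hk m hm =>
          (cancel_mono (J.iCycles q)).1 (hm.trans (J.liftCycles_i _ _ _ _).symm)) }

end Derived

section MoreDefs

variable {A : Type*} [Category A] [Abelian A]
variable {B : Type*} [Category B] [Abelian B]

/-- Applying a functor commutes with shifting a complex. -/
noncomputable def mapShiftedIso (F : A ⥤ B) [F.Additive] (J : CochainComplex A ℕ) (q : ℕ) :
    (F.mapHomologicalComplex (ComplexShape.up ℕ)).obj (shiftedC J q) ≅
      shiftedC ((F.mapHomologicalComplex (ComplexShape.up ℕ)).obj J) q :=
  HomologicalComplex.Hom.isoOfComponents (fun _ => Iso.refl _) (by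
    rintro p p' rfl
    simp only [Iso.refl_hom, Category.id_comp, Category.comp_id,
      Functor.mapHomologicalComplex_obj_d]
    rw [shiftedC_d, shiftedC_d]
    exact (Category.id_comp _).trans (Category.comp_id _).symm)

/-- The canonical identification `H^{t+1}(F(K_q)) ≅ H^{q+t+1}(F(J))` for the shifted
complex `K_q = J_{[q]}`. -/
noncomputable def FshiftHomologyIso (F : A ⥤ B) [F.Additive] (J : CochainComplex A ℕ)
    (q t n : ℕ) (hn : q + t + 1 = n) :
    ((F.mapHomologicalComplex (ComplexShape.up ℕ)).obj (shiftedC J q)).homology (t + 1) ≅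
      ((F.mapHomologicalComplex (ComplexShape.up ℕ)).obj J).homology n :=
  (HomologicalComplex.homologyFunctor B (ComplexShape.up ℕ) (t + 1)).mapIso
    (mapShiftedIso F J q) ≪≫
    shiftHomologyIso ((F.mapHomologicalComplex (ComplexShape.up ℕ)).obj J) q t n hn

/-- The canonical comparison map `H^0(F(K_q)) ⟶ H^q(F(J))`. -/
noncomputable def FshiftHomologyMap₀ (F : A ⥤ B) [F.Additive] (J : CochainComplex A ℕ)
    (q : ℕ) :
    ((F.mapHomologicalComplex (ComplexShape.up ℕ)).obj (shiftedC J q)).homology 0 ⟶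
      ((F.mapHomologicalComplex (ComplexShape.up ℕ)).obj J).homology q :=
  HomologicalComplex.homologyMap (mapShiftedIso F J q).hom 0 ≫
    shiftHomologyMap₀ ((F.mapHomologicalComplex (ComplexShape.up ℕ)).obj J) q

/-- The map `C^m ⟶ H^0(C_{[m+1]})` sending `x` to the class of `δ x`; its image is the
image of `C^m` in `H^0(C_{[m+1]}) = Z^{m+1}`. -/
noncomputable def tauMap (C : CochainComplex A ℕ) (m : ℕ) :
    C.X m ⟶ (shiftedC C (m + 1)).homology 0 :=
  (shiftedC C (m + 1)).liftCycles
    (show C.X m ⟶ (shiftedC C (m + 1)).X 0 from C.d m (m + 1)) 1 (by simp)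
    (by
      rw [show (shiftedC C (m+1)).d 0 1 = C.d (m+1+0) (m+1+0+1) from shiftedC_d _ _ _]
      exact C.d_comp_d _ _ _) ≫ (shiftedC C (m + 1)).homologyπ 0

/-- Since `F` is left exact, `F` applied to the cycles of `J` maps to the cycles
of `F(J)`; this is the comparison morphism (an isomorphism when `F` is left exact). -/
noncomputable def cyclesComparison (F : A ⥤ B) [F.Additive] (J : CochainComplex A ℕ)
    (n : ℕ) :
    F.obj (J.cycles n) ⟶ ((F.mapHomologicalComplex (ComplexShape.up ℕ)).obj J).cycles n :=
  ((F.mapHomologicalComplex (ComplexShape.up ℕ)).obj J).liftCycles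
    (F.map (J.iCycles n)) (n + 1) (by simp)
    (by
      show F.map (J.iCycles n) ≫ F.map (J.d n (n+1)) = 0
      rw [← F.map_comp, HomologicalComplex.iCycles_d, F.map_zero])

end MoreDefs

section ResCycles

variable {A : Type*} [Category A] [Abelian A]
variable {B : Type*} [Category B] [Abelian B]

/-- The comparison `M ⟶ Z^0 = ker(δ^0)` induced by the augmentation of a resolution
`0 → M → J•`; it is an isomorphism because the resolution is exact. -/
noncomputable def resolutionToCycles (J : CochainComplex A ℕ) {M : A}
    (ι : (CochainComplex.single₀ A).obj M ⟶ J) : M ⟶ J.cycles 0 :=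
  J.liftCycles (ι.f 0) 1 (by simp)
    (by
      exact (ι.comm 0 1).trans (by simp <;> exact Limits.zero_comp))

instance isIso_resolutionToCycles (J : CochainComplex A ℕ) {M : A}
    (ι : (CochainComplex.single₀ A).obj M ⟶ J) [QuasiIso ι] :
    IsIso (resolutionToCycles J ι) := by
  have : resolutionToCycles J ι =
      ((HomologicalComplex.singleObjHomologySelfIso (ComplexShape.up ℕ) 0 M).symm ≪≫
        isoOfQuasiIsoAt ι 0 ≪≫ (CochainComplex.isoHomologyπ₀ J).symm).hom := by
    rw [← cancel_mono (J.iCycles 0)]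
    simp [resolutionToCycles]
    rw [← HomologicalComplex.singleObjCyclesSelfIso_inv_homologyπ_assoc]
    simp [CochainComplex.isoHomologyπ₀]
    refine (J.liftCycles_i _ _ _ _).trans ?_
    first
      | (erw [HomologicalComplex.singleObjCyclesSelfIso_inv_iCycles_assoc]
         first | exact (Category.id_comp _).symm | simp [HomologicalComplex.singleObjXSelf,
           HomologicalComplex.singleObjXIsoOfEq])
      | (simp [HomologicalComplex.singleObjCyclesSelfIso, HomologicalComplex.singleObjXSelf,
           HomologicalComplex.singleObjXIsoOfEq])
  rw [this]
  infer_instance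

end ResCycles

section Dchain

variable {A : Type*} [Category A] [Abelian A] [EnoughInjectives A]
variable {B : Type*} [Category B] [Abelian B]

/-- The composite of connecting homomorphisms
`R^pF Z^r → R^{p+1}F Z^{r-1} → ⋯ → R^{p+r}F Z^0` appearing in the dimension
shifting isomorphism, computed from choices of horseshoe data for the short exact
sequences `E_q = (0 → Z^{q-1} → J^{q-1} → Z^q → 0)`. -/
noncomputable def dchain (F : A ⥤ B) [F.Additive] (J : CochainComplex A ℕ)
    (D : ∀ q : ℕ, HorseshoeData (cyclesSeq J q)) :
    (r : ℕ) → (p : ℕ) →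
      ((F.rightDerived p).obj (J.cycles r) ⟶ (F.rightDerived (p + r)).obj (J.cycles 0))
  | 0, _ => 𝟙 _
  | (r+1), p =>
      derivedδ F (D r) p ≫ dchain F J D r (p+1) ≫
        eqToHom (congrArg (fun k => (F.rightDerived k).obj (J.cycles 0))
          (show p + 1 + r = p + (r + 1) by omega))

end Dchain


section ResFacts

variable {A : Type*} [Category A] [Abelian A]

lemma res_ι_f_zero_d {M : A} (K : CochainComplex A ℕ)
    (ι : (CochainComplex.single₀ A).obj M ⟶ K) : ι.f 0 ≫ K.d 0 1 = 0 := by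
  exact (ι.comm 0 1).trans (by simp <;> exact Limits.zero_comp)

lemma res_ι_f_zero_eq {M : A} (K : CochainComplex A ℕ)
    (ι : (CochainComplex.single₀ A).obj M ⟶ K) [QuasiIso ι] :
    ι.f 0 = resolutionToCycles K ι ≫ K.iCycles 0 := by
  exact (K.liftCycles_i _ _ _ _).symm

instance res_mono_ι_f_zero {M : A} (K : CochainComplex A ℕ)
    (ι : (CochainComplex.single₀ A).obj M ⟶ K) [QuasiIso ι] : Mono (ι.f 0) := by
  rw [res_ι_f_zero_eq K ι]
  exact (inferInstance : Mono (resolutionToCycles K ι ≫ K.iCycles 0))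

noncomputable def res_isLimit_kernelFork {M : A} (K : CochainComplex A ℕ)
    (ι : (CochainComplex.single₀ A).obj M ⟶ K) [QuasiIso ι] :
    IsLimit (KernelFork.ofι (ι.f 0) (res_ι_f_zero_d K ι)) :=
  KernelFork.IsLimit.ofι _ _
    (fun {W} k hk => K.liftCycles k 1 (by simp) hk ≫
      (inv (resolutionToCycles K ι) : K.cycles 0 ⟶ M))
    (fun {W} k hk => by
      refine (congrArg (_ ≫ ·) (res_ι_f_zero_eq K ι)).trans ?_
      exact (Category.assoc _ _ _).trans ((congrArg (_ ≫ ·) (IsIso.inv_hom_id_assoc (resolutionToCycles K ι) (K.iCycles 0))).trans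
        (K.liftCycles_i _ _ _ _)))
    (fun {W} k hk m hm => by
      refine (cancel_mono (ι.f 0)).1 (hm.trans ?_)
      refine ((congrArg (_ ≫ ·) (res_ι_f_zero_eq K ι)).trans ?_).symm
      exact (Category.assoc _ _ _).trans ((congrArg (_ ≫ ·) (IsIso.inv_hom_id_assoc (resolutionToCycles K ι) (K.iCycles 0))).trans
        (K.liftCycles_i _ _ _ _)))

lemma res_exact₀ {M : A} (K : CochainComplex A ℕ)
    (ι : (CochainComplex.single₀ A).obj M ⟶ K) [QuasiIso ι] :
    (ShortComplex.mk (ι.f 0) (K.d 0 1) (res_ι_f_zero_d K ι)).Exact :=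
  ShortComplex.exact_of_f_is_kernel _ (res_isLimit_kernelFork K ι)

lemma res_exactAt_succ {M : A} (K : CochainComplex A ℕ)
    (ι : (CochainComplex.single₀ A).obj M ⟶ K) [QuasiIso ι] (n : ℕ) :
    K.ExactAt (n + 1) := by
  rw [← quasiIsoAt_iff_exactAt ι (n + 1) (CochainComplex.exactAt_succ_single_obj _ _)]
  infer_instance

lemma res_exact_succ {M : A} (K : CochainComplex A ℕ)
    (ι : (CochainComplex.single₀ A).obj M ⟶ K) [QuasiIso ι] (n : ℕ) :
    (ShortComplex.mk _ _ (K.d_comp_d n (n + 1) (n + 2))).Exact :=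
  (HomologicalComplex.exactAt_iff' _ n (n + 1) (n + 2) (by simp)
    (by simp only [CochainComplex.next]; rfl)).1 (res_exactAt_succ K ι n)

end ResFacts

section Htpy

variable {A : Type*} [Category A] [Abelian A]
variable {M : A} {K : CochainComplex A ℕ} {ι : (CochainComplex.single₀ A).obj M ⟶ K}
variable {T : CochainComplex A ℕ}

/-- Any chain map from an exact resolution to a degreewise injective complex which is
compatible with the zero augmentation is homotopic to zero. -/
noncomputable def resDescHomotopyZero [QuasiIso ι] [∀ n, Injective (T.X n)]
    (f : K ⟶ T) (comm : ι ≫ f = 0) : Homotopy f 0 := by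
  have h0 : ι.f 0 ≫ f.f 0 = 0 := by
    have := HomologicalComplex.congr_hom comm 0
    simpa using this
  refine Homotopy.mkCoinductive _ ((res_exact₀ K ι).descToInjective (f.f 0) h0)
    (((res_exact₀ K ι).comp_descToInjective (f.f 0) h0).symm)
    ((res_exact_succ K ι 0).descToInjective (f.f 1 -
        (res_exact₀ K ι).descToInjective (f.f 0) h0 ≫ T.d 0 1)
      (by rw [Preadditive.comp_sub, ← Category.assoc,
            (res_exact₀ K ι).comp_descToInjective (f.f 0) h0, f.comm 0 1, sub_self]))
    ?_ ?_
  · rw [(res_exact_succ K ι 0).comp_descToInjective]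
    abel
  · rintro n ⟨g, g', w⟩
    have hw : K.d (n + 1) (n + 2) ≫ (f.f (n + 2) - g' ≫ T.d (n + 1) (n + 2)) = 0 := by
      rw [Preadditive.comp_sub, ← f.comm (n + 1) (n + 2), w, Preadditive.add_comp,
        Category.assoc, Category.assoc, HomologicalComplex.d_comp_d, comp_zero]
      abel
    refine ⟨(res_exact_succ K ι (n + 1)).descToInjective
      (f.f (n + 2) - g' ≫ T.d (n + 1) (n + 2)) hw, ?_⟩
    rw [(res_exact_succ K ι (n + 1)).comp_descToInjective]
    abel

/-- Two chain maps from an exact resolution to a degreewise injective complex which agree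
after precomposition with the augmentation are homotopic. -/
noncomputable def resDescHomotopy [QuasiIso ι] [∀ n, Injective (T.X n)]
    (f g : K ⟶ T) (h : ι ≫ f = ι ≫ g) : Homotopy f g :=
  Homotopy.equivSubZero.invFun (resDescHomotopyZero (ι := ι) (f - g)
    (by rw [Preadditive.comp_sub, h, sub_self]))

end Htpy


section EpiLemmas

open CategoryTheory.Abelian

variable {A : Type*} [Category A] [Abelian A] [EnoughInjectives A]
variable {B : Type*} [Category B] [Abelian B]
variable (F : A ⥤ B) [F.Additive] [PreservesFiniteLimits F]

/-- If `R¹F X = 0`, then `F` applied to the projection `I ⟶ Q` of an injective embedding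
`0 → X → I → Q → 0` is an epimorphism. -/
lemma epi_F_map_cokernel_π (X : A) (hX : IsZero ((F.rightDerived 1).obj X)) :
    Epi (F.map (cokernel.π (Injective.ι X))) := by
  have hz : IsZero (((F.mapHomologicalComplex (ComplexShape.up ℕ)).obj
      (InjectiveResolution.ofCocomplex X)).homology 1) := by
    have h1 : IsZero (((F.mapHomologicalComplex (ComplexShape.up ℕ)).obj
        (InjectiveResolution.of X).cocomplex).homology 1) :=
      hX.of_iso ((InjectiveResolution.of X).isoRightDerivedObj F 1).symm
    rw [InjectiveResolution.of_def] at h1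
    exact h1
  set C₀ := InjectiveResolution.ofCocomplex X with hC₀
  set FC := (F.mapHomologicalComplex (ComplexShape.up ℕ)).obj C₀ with hFC
  have hex : FC.ExactAt 1 := (FC.exactAt_iff_isZero_homology 1).2 hz
  have hsc : (FC.sc' 0 1 2).Exact :=
    (HomologicalComplex.exactAt_iff' FC 0 1 2 (by simp)
      (by simp only [CochainComplex.next]; rfl)).1 hex
  have hd01 : C₀.d 0 1 = cokernel.π (Injective.ι X) ≫ Injective.ι (cokernel (Injective.ι X)) :=
    InjectiveResolution.ofCocomplex_d_0_1 X
  have hjd : Injective.ι (cokernel (Injective.ι X)) ≫ C₀.d 1 2 = 0 := by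
    rw [← cancel_epi (cokernel.π (Injective.ι X)), comp_zero]
    exact (Category.assoc _ _ _).symm.trans
      ((congrArg (· ≫ C₀.d 1 2) hd01.symm).trans (C₀.d_comp_d 0 1 2))
  apply Pseudoelement.epi_of_pseudo_surjective
  intro q
  have h1 : Pseudoelement.pseudoApply (F.map (C₀.d 1 2))
      (Pseudoelement.pseudoApply (F.map (Injective.ι (cokernel (Injective.ι X)))) q) = 0 := by
    have hjd' : F.map (Injective.ι (cokernel (Injective.ι X))) ≫ F.map (C₀.d 1 2) = 0 :=
      (F.map_comp _ _).symm.trans ((congrArg F.map hjd).trans (F.map_zero _ _))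
    exact (Pseudoelement.comp_apply _ _ q).symm.trans
      ((congrArg (fun m => Pseudoelement.pseudoApply m q) hjd').trans
        (Pseudoelement.zero_apply _ _))
  obtain ⟨p, hp⟩ := Pseudoelement.pseudo_exact_of_exact (C := B) hsc _ h1
  refine ⟨p, Pseudoelement.pseudo_injective_of_mono
    (F.map (Injective.ι (cokernel (Injective.ι X)))) ?_⟩
  have hd' : F.map (cokernel.π (Injective.ι X)) ≫ F.map (Injective.ι (cokernel (Injective.ι X)))
      = F.map (C₀.d 0 1) := (F.map_comp _ _).symm.trans (congrArg F.map hd01.symm)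
  exact (Pseudoelement.comp_apply _ _ _).symm.trans
    ((congrArg (fun m => Pseudoelement.pseudoApply m p) hd').trans hp)

/-- If `R¹F X₁ = 0` then `F` preserves the epimorphism of a short exact sequence
`0 → X₁ → X₂ → X₃ → 0`. -/
lemma epi_F_map_g (S' : ShortComplex A) (hS' : S'.ShortExact)
    (hX : IsZero ((F.rightDerived 1).obj S'.X₁)) : Epi (F.map S'.g) := by
  haveI := hS'.mono_f
  haveI := hS'.epi_g
  have hkh : S'.f ≫ Injective.factorThru (Injective.ι S'.X₁) S'.f = Injective.ι S'.X₁ :=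
    Injective.comp_factorThru _ _
  obtain ⟨kq, hgkq⟩ := CokernelCofork.IsColimit.desc' hS'.gIsCokernel
    (Injective.factorThru (Injective.ι S'.X₁) S'.f ≫ cokernel.π (Injective.ι S'.X₁))
    (by rw [← Category.assoc, hkh, cokernel.condition])
  dsimp at hgkq
  set π := cokernel.π (Injective.ι S'.X₁) with hπdef
  set h := Injective.factorThru (Injective.ι S'.X₁) S'.f with hhdef
  set c := pullback.lift S'.g h hgkq with hc
  have hcf : c ≫ pullback.fst kq π = S'.g := pullback.lift_fst _ _ _
  have hcs : c ≫ pullback.snd kq π = h := pullback.lift_snd _ _ _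
  have hmono : Mono c := by
    apply Pseudoelement.mono_of_zero_of_map_zero
    intro a ha
    have h1 : Pseudoelement.pseudoApply S'.g a = 0 := by
      rw [← hcf, Pseudoelement.comp_apply, ha, Pseudoelement.apply_zero]
    obtain ⟨x, hx⟩ := Pseudoelement.pseudo_exact_of_exact hS'.exact a h1
    have h2 : Pseudoelement.pseudoApply h a = 0 := by
      rw [← hcs, Pseudoelement.comp_apply, ha, Pseudoelement.apply_zero]
    have h3 : Pseudoelement.pseudoApply (Injective.ι S'.X₁) x = 0 := by
      rw [← hkh, Pseudoelement.comp_apply, hx, h2]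
    have h4 : x = 0 :=
      Pseudoelement.zero_of_map_zero _ (Pseudoelement.pseudo_injective_of_mono _) x h3
    rw [← hx, h4, Pseudoelement.apply_zero]
  have hepi : Epi c := by
    apply Pseudoelement.epi_of_pseudo_surjective
    intro tbar
    refine Quotient.inductionOn tbar (fun t => ?_)
    let th : t.left ⟶ pullback kq π := t.hom
    have hth : t.hom = th := rfl
    haveI : Epi (pullback.snd S'.g (th ≫ pullback.fst kq π)) :=
      Abelian.epi_pullback_of_epi_f _ _
    have hδ : (pullback.snd S'.g (th ≫ pullback.fst kq π) ≫ th -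
        pullback.fst S'.g (th ≫ pullback.fst kq π) ≫ c) ≫ pullback.fst kq π = 0 := by
      rw [Preadditive.sub_comp, Category.assoc, Category.assoc, hcf, pullback.condition,
        sub_self]
    have hκπ : (kernel.ι (pullback.fst kq π) ≫ pullback.snd kq π) ≫ π = 0 := by
      rw [Category.assoc, ← pullback.condition, ← Category.assoc, kernel.condition,
        zero_comp]
    obtain ⟨ξ, hξ⟩ := KernelFork.IsLimit.lift'
      (Abelian.monoIsKernelOfCokernel _ (cokernelIsCokernel (Injective.ι S'.X₁))) _ hκπ
    dsimp at hξ
    have hξκ : ξ ≫ S'.f ≫ c = kernel.ι (pullback.fst kq π) := by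
      apply pullback.hom_ext
      · simp only [Category.assoc, hcf, S'.zero, comp_zero, kernel.condition]
      · simp only [Category.assoc, hcs]
        rw [show S'.f ≫ h = Injective.ι S'.X₁ from hkh]
        exact hξ
    have hfin : pullback.snd S'.g (th ≫ pullback.fst kq π) ≫ th =
        (pullback.fst S'.g (th ≫ pullback.fst kq π) +
          kernel.lift (pullback.fst kq π) _ hδ ≫ ξ ≫ S'.f) ≫ c := by
      rw [Preadditive.add_comp]
      have h5 : (kernel.lift (pullback.fst kq π) _ hδ ≫ ξ ≫ S'.f) ≫ c =
          pullback.snd S'.g (th ≫ pullback.fst kq π) ≫ th -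
            pullback.fst S'.g (th ≫ pullback.fst kq π) ≫ c := by
        simp only [Category.assoc]
        rw [hξκ, kernel.lift_ι]
      rw [h5]
      abel
    refine ⟨⟦Over.mk (pullback.fst S'.g (th ≫ pullback.fst kq π) +
      kernel.lift (pullback.fst kq π) _ hδ ≫ ξ ≫ S'.f)⟧, ?_⟩
    rw [Pseudoelement.pseudoApply_mk']
    apply Quotient.sound
    refine ⟨_, 𝟙 _, pullback.snd S'.g (th ≫ pullback.fst kq π), inferInstance,
      inferInstance, ?_⟩
    dsimp
    rw [Category.id_comp, ← hfin, hth]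
  haveI : Mono c := hmono
  haveI : Epi c := hepi
  haveI : IsIso c := isIso_of_mono_of_epi c
  haveI : Epi (F.map π) := epi_F_map_cokernel_π F S'.X₁ hX
  have he : (F.map c ≫ (PreservesPullback.iso F kq π).hom) ≫
      pullback.fst (F.map kq) (F.map π) = F.map S'.g := by
    rw [Category.assoc, PreservesPullback.iso_hom_fst, ← F.map_comp, hcf]
  apply Pseudoelement.epi_of_pseudo_surjective
  intro z
  obtain ⟨w, hw⟩ := Pseudoelement.pseudo_surjective_of_epi (F.map π)
    (Pseudoelement.pseudoApply (F.map kq) z)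
  obtain ⟨s, hs1, hs2⟩ := Pseudoelement.pseudo_pullback (f := F.map kq) (g := F.map π)
    (p := z) (q := w) hw.symm
  obtain ⟨y, hy⟩ := Pseudoelement.pseudo_surjective_of_epi
    (F.map c ≫ (PreservesPullback.iso F kq π).hom) s
  refine ⟨y, ?_⟩
  rw [← he, Pseudoelement.comp_apply, hy, hs1]

/-- A left-exact functor maps a short exact sequence with `R¹F`-acyclic
first term to a short exact sequence. -/
lemma F_map_shortExact (S' : ShortComplex A) (hS' : S'.ShortExact)
    (hX : IsZero ((F.rightDerived 1).obj S'.X₁)) : (S'.map F).ShortExact := by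
  haveI := hS'.mono_f
  haveI := hS'.epi_g
  have hlim := KernelFork.mapIsLimit _ hS'.fIsKernel F
  have hexact : (S'.map F).Exact := ShortComplex.exact_of_f_is_kernel _ hlim
  haveI : Mono (S'.map F).f := by exact (inferInstance : Mono (F.map S'.f))
  haveI : Epi (S'.map F).g := epi_F_map_g F S' hS' hX
  exact ⟨hexact⟩

end EpiLemmas


section LiftSection

variable {A : Type*} [Category A] [Abelian A]

/-- The auxiliary invariant for the inductive construction of the middle lift. -/
def LiftP (L I : CochainComplex A ℕ) {C : A} (ιL0 : C ⟶ L.X 0) (ιI0 : C ⟶ I.X 0) :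
    (n : ℕ) → (L.X n ⟶ I.X n) → Prop
  | 0, p => ιL0 ≫ p = ιI0
  | (m+1), p => L.d m (m+1) ≫ p ≫ I.d (m+1) (m+2) = 0

lemma lift_degreewise {J L K : CochainComplex A ℕ} (u : J ⟶ L) (v : L ⟶ K)
    (huv : u ≫ v = 0) (hE : (ShortComplex.mk u v huv).ShortExact) (n : ℕ) :
    ((ShortComplex.mk u v huv).map
      (HomologicalComplex.eval A (ComplexShape.up ℕ) n)).ShortExact :=
  (HomologicalComplex.shortExact_iff_degreewise_shortExact _).1 hE n

/-- Base step of the construction of the middle lift. -/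
lemma lift_base (S : ShortComplex A) (hS : S.ShortExact)
    {J L K I : CochainComplex A ℕ}
    (u : J ⟶ L) (v : L ⟶ K) (huv : u ≫ v = 0)
    (hE : (ShortComplex.mk u v huv).ShortExact)
    (ιJ : (CochainComplex.single₀ A).obj S.X₁ ⟶ J)
    (ιL : (CochainComplex.single₀ A).obj S.X₂ ⟶ L)
    (ιK : (CochainComplex.single₀ A).obj S.X₃ ⟶ K)
    (ιI : (CochainComplex.single₀ A).obj S.X₂ ⟶ I)
    (q : J ⟶ I) [∀ n, Injective (I.X n)] [QuasiIso ιK]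
    (hu0 : ιJ.f 0 ≫ u.f 0 = S.f ≫ ιL.f 0)
    (hv0 : ιL.f 0 ≫ v.f 0 = S.g ≫ ιK.f 0)
    (hq0 : ιJ.f 0 ≫ q.f 0 = S.f ≫ ιI.f 0) :
    ∃ p0 : L.X 0 ⟶ I.X 0,
      u.f 0 ≫ p0 = q.f 0 ∧ ιL.f 0 ≫ p0 = ιI.f 0 := by
  haveI : Mono (u.f 0) := (lift_degreewise u v huv hE 0).mono_f
  haveI := hS.epi_g
  set p0' := Injective.factorThru (q.f 0) (u.f 0) with hp0'def
  have hp0' : u.f 0 ≫ p0' = q.f 0 := Injective.comp_factorThru _ _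
  have hfe : S.f ≫ (ιL.f 0 ≫ p0' - ιI.f 0) = 0 := by
    refine (Preadditive.comp_sub _ _ _).trans (sub_eq_zero.2 ?_)
    exact (Category.assoc _ _ _).symm.trans ((congrArg (· ≫ p0') hu0.symm).trans
      ((Category.assoc _ _ _).trans ((congrArg (ιJ.f 0 ≫ ·) hp0').trans hq0)))
  obtain ⟨e', he'⟩ : ∃ e' : ((CochainComplex.single₀ A).obj S.X₃).X 0 ⟶ I.X 0,
      S.g ≫ e' = ιL.f 0 ≫ p0' - ιI.f 0 :=
    ⟨_, (CokernelCofork.IsColimit.desc' hS.gIsCokernel _ hfe).2⟩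
  have hmK : Mono (ιK.f 0) := res_mono_ι_f_zero K ιK
  refine ⟨p0' - v.f 0 ≫ Injective.factorThru e' (ιK.f 0), ?_, ?_⟩
  · rw [Preadditive.comp_sub, hp0', ← Category.assoc]
    have : u.f 0 ≫ v.f 0 = 0 := by
      have := HomologicalComplex.congr_hom huv 0
      simpa using this
    rw [this, zero_comp, sub_zero]
  · refine (Preadditive.comp_sub _ _ _).trans ?_
    have h1 : ιL.f 0 ≫ v.f 0 ≫ Injective.factorThru e' (ιK.f 0) = ιL.f 0 ≫ p0' - ιI.f 0 :=
      (Category.assoc _ _ _).symm.trans ((congrArg (· ≫ _) hv0).trans ((Category.assoc _ _ _).trans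
        ((congrArg (S.g ≫ ·) (Injective.comp_factorThru e' (ιK.f 0))).trans he')))
    exact (congrArg (_ - ·) h1).trans (sub_sub_cancel _ _)

/-- Inductive step of the construction of the middle lift. -/
lemma lift_step (S : ShortComplex A) (hS : S.ShortExact)
    {J L K I : CochainComplex A ℕ}
    (u : J ⟶ L) (v : L ⟶ K) (huv : u ≫ v = 0)
    (hE : (ShortComplex.mk u v huv).ShortExact)
    (ιL : (CochainComplex.single₀ A).obj S.X₂ ⟶ L)
    (ιK : (CochainComplex.single₀ A).obj S.X₃ ⟶ K)
    (ιI : (CochainComplex.single₀ A).obj S.X₂ ⟶ I)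
    (q : J ⟶ I) [∀ n, Injective (I.X n)] [QuasiIso ιK]
    (hv0 : ιL.f 0 ≫ v.f 0 = S.g ≫ ιK.f 0)
    (n : ℕ) (pn : L.X n ⟶ I.X n) (hun : u.f n ≫ pn = q.f n)
    (hP : LiftP L I (ιL.f 0) (ιI.f 0) n pn) :
    ∃ pn1 : L.X (n+1) ⟶ I.X (n+1),
      u.f (n+1) ≫ pn1 = q.f (n+1) ∧ L.d n (n+1) ≫ pn1 = pn ≫ I.d n (n+1) := by
  haveI : Mono (u.f (n+1)) := (lift_degreewise u v huv hE (n+1)).mono_f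
  set p' := Injective.factorThru (q.f (n+1)) (u.f (n+1)) with hp'def
  have hp' : u.f (n+1) ≫ p' = q.f (n+1) := Injective.comp_factorThru _ _
  have he : u.f n ≫ (L.d n (n+1) ≫ p' - pn ≫ I.d n (n+1)) = 0 := by
    rw [Preadditive.comp_sub, ← Category.assoc, u.comm n (n+1), Category.assoc, hp',
      ← Category.assoc, hun, q.comm n (n+1), sub_self]
  obtain ⟨e₁, he₁⟩ : ∃ e₁ : K.X n ⟶ I.X (n+1),
      v.f n ≫ e₁ = L.d n (n+1) ≫ p' - pn ≫ I.d n (n+1) :=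
    ⟨_, (CokernelCofork.IsColimit.desc' (lift_degreewise u v huv hE n).gIsCokernel _ he).2⟩
  have hψ : ∃ ψ' : K.X (n+1) ⟶ I.X (n+1), K.d n (n+1) ≫ ψ' = e₁ := by
    obtain _ | m := n
    · have hk : ιK.f 0 ≫ e₁ = 0 := by
        haveI := hS.epi_g
        have h0 : ιL.f 0 ≫ pn = ιI.f 0 := hP
        have ha : ιL.f 0 ≫ L.d 0 (0+1) ≫ p' = 0 := (Category.assoc _ _ _).symm.trans
          ((congrArg (· ≫ p') (res_ι_f_zero_d L ιL)).trans zero_comp)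
        have hb : ιL.f 0 ≫ pn ≫ I.d 0 (0+1) = 0 := (Category.assoc _ _ _).symm.trans
          ((congrArg (· ≫ I.d 0 (0+1)) h0).trans (res_ι_f_zero_d I ιI))
        refine (cancel_epi S.g).1 ((Category.assoc _ _ _).symm.trans ?_)
        refine ((congrArg (· ≫ e₁) hv0.symm).trans ((Category.assoc _ _ _).trans
          ((congrArg (ιL.f 0 ≫ ·) he₁).trans ((Preadditive.comp_sub _ _ _).trans ?_)))).trans
            comp_zero.symm
        exact (congrArg₂ (· - ·) ha hb).trans (sub_zero _)
      exact ⟨(res_exact₀ K ιK).descToInjective e₁ hk,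
        (res_exact₀ K ιK).comp_descToInjective e₁ hk⟩
    · have hk : K.d m (m+1) ≫ e₁ = 0 := by
        haveI : Epi (v.f m) := (lift_degreewise u v huv hE m).epi_g
        rw [← cancel_epi (v.f m), comp_zero, ← Category.assoc, v.comm m (m+1),
          Category.assoc, he₁, Preadditive.comp_sub, ← Category.assoc,
          HomologicalComplex.d_comp_d, zero_comp]
        have hP' : L.d m (m+1) ≫ pn ≫ I.d (m+1) (m+2) = 0 := hP
        rw [hP', zero_sub, neg_eq_zero]
      exact ⟨(res_exact_succ K ιK m).descToInjective e₁ hk,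
        (res_exact_succ K ιK m).comp_descToInjective e₁ hk⟩
  obtain ⟨ψ', hψ'⟩ := hψ
  refine ⟨p' - v.f (n+1) ≫ ψ', ?_, ?_⟩
  · rw [Preadditive.comp_sub, hp', ← Category.assoc]
    have : u.f (n+1) ≫ v.f (n+1) = 0 := by
      have := HomologicalComplex.congr_hom huv (n+1)
      simpa using this
    rw [this, zero_comp, sub_zero]
  · rw [Preadditive.comp_sub, ← Category.assoc, ← v.comm n (n+1), Category.assoc, hψ',
      he₁, sub_sub_cancel]

/-- The full inductive data: a degreewise lift with the chain-map property. -/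
noncomputable def liftAux (S : ShortComplex A) (hS : S.ShortExact)
    {J L K I : CochainComplex A ℕ}
    (u : J ⟶ L) (v : L ⟶ K) (huv : u ≫ v = 0)
    (hE : (ShortComplex.mk u v huv).ShortExact)
    (ιJ : (CochainComplex.single₀ A).obj S.X₁ ⟶ J)
    (ιL : (CochainComplex.single₀ A).obj S.X₂ ⟶ L)
    (ιK : (CochainComplex.single₀ A).obj S.X₃ ⟶ K)
    (ιI : (CochainComplex.single₀ A).obj S.X₂ ⟶ I)
    (q : J ⟶ I) [∀ n, Injective (I.X n)] [QuasiIso ιK]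
    (hu0 : ιJ.f 0 ≫ u.f 0 = S.f ≫ ιL.f 0)
    (hv0 : ιL.f 0 ≫ v.f 0 = S.g ≫ ιK.f 0)
    (hq0 : ιJ.f 0 ≫ q.f 0 = S.f ≫ ιI.f 0) :
    ∀ n : ℕ, Σ' (pn : L.X n ⟶ I.X n) (pn1 : L.X (n+1) ⟶ I.X (n+1)),
      (u.f n ≫ pn = q.f n) ∧ (u.f (n+1) ≫ pn1 = q.f (n+1)) ∧
        (L.d n (n+1) ≫ pn1 = pn ≫ I.d n (n+1)) ∧ LiftP L I (ιL.f 0) (ιI.f 0) n pn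
  | 0 =>
      let hb := lift_base S hS u v huv hE ιJ ιL ιK ιI q hu0 hv0 hq0
      let hs := lift_step S hS u v huv hE ιL ιK ιI q hv0 0 hb.choose hb.choose_spec.1
        (show LiftP L I (ιL.f 0) (ιI.f 0) 0 hb.choose from hb.choose_spec.2)
      ⟨hb.choose, hs.choose, hb.choose_spec.1, hs.choose_spec.1, hs.choose_spec.2,
        hb.choose_spec.2⟩
  | (n+1) =>
      let prev := liftAux S hS u v huv hE ιJ ιL ιK ιI q hu0 hv0 hq0 n
      let hP : LiftP L I (ιL.f 0) (ιI.f 0) (n+1) prev.2.1 := by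
        show L.d n (n+1) ≫ prev.2.1 ≫ I.d (n+1) (n+2) = 0
        rw [← Category.assoc, prev.2.2.2.2.1, Category.assoc,
          HomologicalComplex.d_comp_d, comp_zero]
      let hs := lift_step S hS u v huv hE ιL ιK ιI q hv0 (n+1) prev.2.1
        prev.2.2.2.1 hP
      ⟨prev.2.1, hs.choose, prev.2.2.2.1, hs.choose_spec.1, hs.choose_spec.2, hP⟩

/-- Existence of the middle lift: a chain map `p : L ⟶ I` with `u ≫ p = q` compatible
with the augmentations. -/
lemma lift_exists (S : ShortComplex A) (hS : S.ShortExact)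
    {J L K I : CochainComplex A ℕ}
    (u : J ⟶ L) (v : L ⟶ K) (huv : u ≫ v = 0)
    (hE : (ShortComplex.mk u v huv).ShortExact)
    (ιJ : (CochainComplex.single₀ A).obj S.X₁ ⟶ J)
    (ιL : (CochainComplex.single₀ A).obj S.X₂ ⟶ L)
    (ιK : (CochainComplex.single₀ A).obj S.X₃ ⟶ K)
    (ιI : (CochainComplex.single₀ A).obj S.X₂ ⟶ I)
    (q : J ⟶ I) [∀ n, Injective (I.X n)] [QuasiIso ιK]
    (hu0 : ιJ.f 0 ≫ u.f 0 = S.f ≫ ιL.f 0)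
    (hv0 : ιL.f 0 ≫ v.f 0 = S.g ≫ ιK.f 0)
    (hq0 : ιJ.f 0 ≫ q.f 0 = S.f ≫ ιI.f 0) :
    ∃ p : L ⟶ I, u ≫ p = q ∧ ιL.f 0 ≫ p.f 0 = ιI.f 0 := by
  have hsucc : ∀ n : ℕ,
      (liftAux S hS u v huv hE ιJ ιL ιK ιI q hu0 hv0 hq0 (n+1)).1 =
        (liftAux S hS u v huv hE ιJ ιL ιK ιI q hu0 hv0 hq0 n).2.1 := fun n => rfl
  refine ⟨{ f := fun n => (liftAux S hS u v huv hE ιJ ιL ιK ιI q hu0 hv0 hq0 n).1,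
            comm' := ?_ }, ?_, ?_⟩
  · rintro i j (rfl : i + 1 = j)
    rw [hsucc i]
    exact (liftAux S hS u v huv hE ιJ ιL ιK ιI q hu0 hv0 hq0 i).2.2.2.2.1.symm
  · ext n
    simp only [HomologicalComplex.comp_f]
    exact (liftAux S hS u v huv hE ιJ ιL ιK ιI q hu0 hv0 hq0 n).2.2.1
  · exact (liftAux S hS u v huv hE ιJ ιL ιK ιI q hu0 hv0 hq0 0).2.2.2.2.2

/-- Descend a chain map through a degreewise-epi quotient of complexes. -/
lemma descend_exists {J L K T : CochainComplex A ℕ}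
    (u : J ⟶ L) (v : L ⟶ K) (huv : u ≫ v = 0)
    (hE : (ShortComplex.mk u v huv).ShortExact)
    (r : L ⟶ T) (hr : u ≫ r = 0) :
    ∃ w : K ⟶ T, v ≫ w = r := by
  have hz : ∀ n : ℕ, u.f n ≫ r.f n = 0 := fun n => by
    have := HomologicalComplex.congr_hom hr n
    simpa using this
  have hw : ∀ n, {l : K.X n ⟶ T.X n // v.f n ≫ l = r.f n} := fun n =>
    ⟨_, (CokernelCofork.IsColimit.desc'
      (lift_degreewise u v huv hE n).gIsCokernel (r.f n) (hz n)).2⟩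
  have hwn : ∀ n, v.f n ≫ (hw n).1 = r.f n := fun n => (hw n).2
  refine ⟨{ f := fun n => (hw n).1, comm' := ?_ }, ?_⟩
  · rintro i j (rfl : i + 1 = j)
    haveI : Epi (v.f i) := (lift_degreewise u v huv hE i).epi_g
    rw [← cancel_epi (v.f i), ← Category.assoc, hwn i, ← Category.assoc,
      v.comm i (i+1), Category.assoc, hwn (i+1), r.comm i (i+1)]
  · ext n
    simp only [HomologicalComplex.comp_f]
    exact hwn n

end LiftSection


section DeltaNat

variable {B : Type*} [Category B] [Abelian B]

/-- Naturality of the connecting homomorphism in homology with respect to morphisms of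
short exact sequences of complexes. -/
lemma δ_naturality' {S₁ S₂ : ShortComplex (HomologicalComplex B (ComplexShape.up ℕ))}
    (φ : S₁ ⟶ S₂) (h₁ : S₁.ShortExact) (h₂ : S₂.ShortExact) (i j : ℕ)
    (hij : (ComplexShape.up ℕ).Rel i j) :
    h₁.δ i j hij ≫ HomologicalComplex.homologyMap φ.τ₁ j =
      HomologicalComplex.homologyMap φ.τ₃ i ≫ h₂.δ i j hij :=
  HomologicalComplex.HomologySequence.δ_naturality φ h₁ h₂ i j hij

end DeltaNat

/-- **Lemma A.** Let `𝓔 = (0 → A → C → B → 0)` be a short exact sequence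
in `𝒜` (encoded as a short complex `S` with `S.X₁ = A`, `S.X₂ = C`, `S.X₃ = B`), let
`0 → A → J•`, `0 → B → K•`, `0 → C → L•` be `F`-acyclic resolutions, and let
`𝐄 = (0 → J• → L• → K• → 0)` be a short exact sequence of complexes whose augmentations
form a commutative diagram with `𝓔`.  Then (`F𝐄` is a short exact sequence of complexes
and) for every `i ≥ 0` the square commutes:
`c^{i+1} ∘ δ^i_{F𝐄} = ∂^i_𝓔 ∘ c^i`, where `δ^i_{F𝐄}` is the connecting homomorphism of
`0 → FJ• → FL• → FK• → 0`, `∂^i_𝓔` is the connecting homomorphism of the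
derived-functor long exact sequence of `𝓔` (computed by a horseshoe datum `D`), and
`c^i, c^{i+1}` are the canonical isomorphisms. -/
theorem sign_lemma_stmt1 {A : Type*} [Category A] [Abelian A] [EnoughInjectives A]
    {B : Type*} [Category B] [Abelian B]
    (F : A ⥤ B) [F.Additive] [PreservesFiniteLimits F]
    (S : ShortComplex A) (hS : S.ShortExact)
    (JA : FAcyclicResolution F S.X₁) (KB : FAcyclicResolution F S.X₃)
    (LC : FAcyclicResolution F S.X₂)
    (u : JA.cocomplex ⟶ LC.cocomplex) (v : LC.cocomplex ⟶ KB.cocomplex)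
    (huv : u ≫ v = 0) (hE : (ShortComplex.mk u v huv).ShortExact)
    (hu : JA.ι ≫ u = (CochainComplex.single₀ A).map S.f ≫ LC.ι)
    (hv : LC.ι ≫ v = (CochainComplex.single₀ A).map S.g ≫ KB.ι)
    (I₁ : InjectiveResolution S.X₁) (f₁ : JA.cocomplex ⟶ I₁.cocomplex)
    (hf₁ : JA.ι ≫ f₁ = I₁.ι)
    (I₃ : InjectiveResolution S.X₃) (f₃ : KB.cocomplex ⟶ I₃.cocomplex)
    (hf₃ : KB.ι ≫ f₃ = I₃.ι)
    (D : HorseshoeData S) (i : ℕ) :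
    ∃ hFE : ((ShortComplex.mk u v huv).map
        (F.mapHomologicalComplex (ComplexShape.up ℕ))).ShortExact,
      hFE.δ i (i + 1) rfl ≫ canonicalMap F JA I₁ f₁ (i + 1) =
        canonicalMap F KB I₃ f₃ i ≫ derivedδ F D i := by
  classical
  have hFE : ((ShortComplex.mk u v huv).map
      (F.mapHomologicalComplex (ComplexShape.up ℕ))).ShortExact := by
    rw [HomologicalComplex.shortExact_iff_degreewise_shortExact]
    intro n
    exact F_map_shortExact F _ (lift_degreewise u v huv hE n) (JA.acyclic n 1 le_rfl)
  refine ⟨hFE, ?_⟩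
  set θ := InjectiveResolution.desc (𝟙 S.X₁) D.I₁ I₁ with hθdef
  set θ₃ := InjectiveResolution.desc (𝟙 S.X₃) D.I₃ I₃ with hθ₃def
  have hθ0 : I₁.ι.f 0 ≫ θ.f 0 = D.I₁.ι.f 0 := by
    rw [hθdef, InjectiveResolution.desc_commutes_zero]
    exact Category.id_comp _
  have hθ₃0 : I₃.ι.f 0 ≫ θ₃.f 0 = 𝟙 S.X₃ ≫ D.I₃.ι.f 0 :=
    InjectiveResolution.desc_commutes_zero _ _ _
  have hθ₃c : I₃.ι ≫ θ₃ = D.I₃.ι := by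
    rw [hθ₃def, InjectiveResolution.desc_commutes]
    simp
  have hu0 : JA.ι.f 0 ≫ u.f 0 = S.f ≫ LC.ι.f 0 := by
    have := HomologicalComplex.congr_hom hu 0
    simpa using this
  have hv0 : LC.ι.f 0 ≫ v.f 0 = S.g ≫ KB.ι.f 0 := by
    have := HomologicalComplex.congr_hom hv 0
    simpa using this
  have hι : JA.ι.f 0 ≫ f₁.f 0 = I₁.ι.f 0 := by
    have := HomologicalComplex.congr_hom hf₁ 0
    simpa using this
  have h2 : D.I₁.ι.f 0 ≫ D.f.f 0 = S.f ≫ D.I₂.ι.f 0 := by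
    have := HomologicalComplex.congr_hom D.comm₁ 0
    simpa using this
  have hq0 : JA.ι.f 0 ≫ ((f₁ ≫ θ) ≫ D.f).f 0 = S.f ≫ D.I₂.ι.f 0 := by
    simp only [HomologicalComplex.comp_f]
    simp only [← Category.assoc]
    rw [hι, hθ0, h2]
  obtain ⟨p, hp, hp0⟩ := lift_exists S hS u v huv hE JA.ι LC.ι KB.ι D.I₂.ι
    ((f₁ ≫ θ) ≫ D.f) hu0 hv0 hq0
  obtain ⟨w, hw⟩ := descend_exists u v huv hE (p ≫ D.g)
    (by rw [← Category.assoc, hp, Category.assoc, D.zero, comp_zero])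
  have hw0 : KB.ι ≫ w = D.I₃.ι := by
    have h3 : D.I₂.ι.f 0 ≫ D.g.f 0 = S.g ≫ D.I₃.ι.f 0 := by
      have := HomologicalComplex.congr_hom D.comm₂ 0
      simpa using this
    have hwc : v.f 0 ≫ w.f 0 = p.f 0 ≫ D.g.f 0 := by
      have := HomologicalComplex.congr_hom hw 0
      simpa using this
    refine HomologicalComplex.hom_ext _ _ (fun n => ?_)
    obtain _ | m := n
    · haveI := hS.epi_g
      show (KB.ι ≫ w).f 0 = D.I₃.ι.f 0
      rw [HomologicalComplex.comp_f]
      refine (cancel_epi S.g).1 ?_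
      exact (Category.assoc _ _ _).symm.trans ((congrArg (· ≫ w.f 0) hv0.symm).trans
        ((Category.assoc _ _ _).trans ((congrArg (LC.ι.f 0 ≫ ·) hwc).trans
          ((Category.assoc _ _ _).symm.trans ((congrArg (· ≫ D.g.f 0) hp0).trans h3)))))
    · exact (HomologicalComplex.isZero_single_obj_X (ComplexShape.up ℕ) 0 S.X₃ (m+1)
        (by simp)).eq_of_src _ _
  have hwhom : KB.ι ≫ w = KB.ι ≫ (f₃ ≫ θ₃) := by
    rw [hw0, ← Category.assoc, hf₃, hθ₃c]
  have hwf₃ : HomologicalComplex.homologyMap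
        ((F.mapHomologicalComplex (ComplexShape.up ℕ)).map w) i =
      HomologicalComplex.homologyMap
        ((F.mapHomologicalComplex (ComplexShape.up ℕ)).map (f₃ ≫ θ₃)) i :=
    (F.mapHomotopy (resDescHomotopy (ι := KB.ι) w (f₃ ≫ θ₃) hwhom)).homologyMap_eq i
  have hnat : hFE.δ i (i+1) rfl ≫ HomologicalComplex.homologyMap
        ((F.mapHomologicalComplex (ComplexShape.up ℕ)).map ((f₁ ≫ θ))) (i+1) =
      HomologicalComplex.homologyMap
        ((F.mapHomologicalComplex (ComplexShape.up ℕ)).map w) i ≫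
        (D.map_shortExact F).δ i (i+1) rfl :=
    δ_naturality'
      { τ₁ := (F.mapHomologicalComplex (ComplexShape.up ℕ)).map ((f₁ ≫ θ))
        τ₂ := (F.mapHomologicalComplex (ComplexShape.up ℕ)).map p
        τ₃ := (F.mapHomologicalComplex (ComplexShape.up ℕ)).map w
        comm₁₂ := by
          exact (Functor.map_comp _ _ _).symm.trans
            ((congrArg (F.mapHomologicalComplex (ComplexShape.up ℕ)).map hp.symm).trans
              (Functor.map_comp _ _ _))
        comm₂₃ := by
          exact (Functor.map_comp _ _ _).symm.trans
            ((congrArg (F.mapHomologicalComplex (ComplexShape.up ℕ)).map hw.symm).trans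
              (Functor.map_comp _ _ _)) }
      hFE (D.map_shortExact F) i (i+1) rfl
  have e₁ : HomologicalComplex.homologyMap
        ((F.mapHomologicalComplex (ComplexShape.up ℕ)).map f₁) (i+1) ≫
        (I₁.isoRightDerivedObj F (i+1)).inv =
      HomologicalComplex.homologyMap
        ((F.mapHomologicalComplex (ComplexShape.up ℕ)).map ((f₁ ≫ θ))) (i+1) ≫
        (D.I₁.isoRightDerivedObj F (i+1)).inv := by
    have hnatθ := InjectiveResolution.isoRightDerivedObj_inv_naturality (𝟙 S.X₁) I₁ D.I₁ θ
      (by rw [hθ0]; exact (Category.id_comp _).symm) F (i+1)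
    rw [CategoryTheory.Functor.map_id, Category.comp_id] at hnatθ
    rw [hnatθ, Functor.map_comp, HomologicalComplex.homologyMap_comp]
    exact (Category.assoc _ _ _).symm
  have e₃ : HomologicalComplex.homologyMap
        ((F.mapHomologicalComplex (ComplexShape.up ℕ)).map f₃) i ≫
        (I₃.isoRightDerivedObj F i).inv =
      HomologicalComplex.homologyMap
        ((F.mapHomologicalComplex (ComplexShape.up ℕ)).map (f₃ ≫ θ₃)) i ≫
        (D.I₃.isoRightDerivedObj F i).inv := by
    have hnatθ := InjectiveResolution.isoRightDerivedObj_inv_naturality (𝟙 S.X₃) I₃ D.I₃ θ₃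
      hθ₃0 F i
    rw [CategoryTheory.Functor.map_id, Category.comp_id] at hnatθ
    rw [hnatθ, Functor.map_comp, HomologicalComplex.homologyMap_comp]
    exact (Category.assoc _ _ _).symm
  have hL : hFE.δ i (i + 1) rfl ≫ canonicalMap F JA I₁ f₁ (i + 1) =
      HomologicalComplex.homologyMap
        ((F.mapHomologicalComplex (ComplexShape.up ℕ)).map (f₃ ≫ θ₃)) i ≫
        (D.map_shortExact F).δ i (i + 1) rfl ≫ (D.I₁.isoRightDerivedObj F (i + 1)).inv :=
    (congrArg (hFE.δ i (i + 1) rfl ≫ ·) e₁).trans ((Category.assoc _ _ _).symm.trans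
      ((congrArg (· ≫ (D.I₁.isoRightDerivedObj F (i + 1)).inv) hnat).trans
        ((Category.assoc _ _ _).trans (congrArg (· ≫ _) hwf₃))))
  have hR : canonicalMap F KB I₃ f₃ i ≫ derivedδ F D i =
      HomologicalComplex.homologyMap
        ((F.mapHomologicalComplex (ComplexShape.up ℕ)).map (f₃ ≫ θ₃)) i ≫
        (D.map_shortExact F).δ i (i + 1) rfl ≫ (D.I₁.isoRightDerivedObj F (i + 1)).inv :=
    (congrArg (· ≫ derivedδ F D i) e₃).trans ((Category.assoc _ _ _).trans
      (congrArg (_ ≫ ·) (Iso.inv_hom_id_assoc (D.I₃.isoRightDerivedObj F i)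
        ((D.map_shortExact F).δ i (i + 1) rfl ≫ (D.I₁.isoRightDerivedObj F (i + 1)).inv))))
  exact hL.trans hR.symm
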